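/- arXiv:2507.09032 — 3 statements merged into one kernel-verified Lean document; each statement's English description precedes it below -/
import Mathlib

section
/- (Large-D limit of the MedPoisson, Proposition 3.5.) Fix μ > 0. Then, as D → ∞ through odd values, either (i) there exists an integer m ∈ {⌊μ⌋, ⌈μ⌉} such that for every y ∈ ℕ, MedPois_μ^{(D)}(y) → 1 if y = m and MedPois_μ^{(D)}(y) → 0 otherwise (convergence to a point mass at ⌊μ⌋ or ⌈μ⌉); or (ii) there exists an integer m with {m, m+1} ∩ {⌊μ⌋, ⌈μ⌉} ≠ ∅ such that for every y ∈ ℕ, MedPois_μ^{(D)}(y) → 1/2 if y ∈ {m, m+1} and MedPois_μ^{(D)}(y) → 0 otherwise (convergence to the discrete uniform distribution on two consecutive integers, at least one of which is ⌊μ⌋ or ⌈μ⌉). -/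
open Finset Filter

/-- The Poisson pmf with rate `μ`. -/
noncomputable def poisPMF (μ : ℝ) (k : ℕ) : ℝ := Real.exp (-μ) * μ ^ k / (Nat.factorial k : ℝ)

/-- `poisCDFlt μ y = ∑_{k < y} poisPMF μ k`, i.e. the Poisson CDF evaluated at `y - 1`. -/
noncomputable def poisCDFlt (μ : ℝ) (y : ℕ) : ℝ := ∑ k ∈ Finset.range y, poisPMF μ k

/-- `B r D q = ∑_{t=r}^{D} (D choose t) q^t (1-q)^(D-t)`. -/
noncomputable def B (r D : ℕ) (q : ℝ) : ℝ :=
  ∑ t ∈ Finset.Icc r D, (D.choose t : ℝ) * q ^ t * (1 - q) ^ (D - t)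

/-- pmf of the `r`-th order statistic of `D` iid Poisson(`μ`) draws. -/
noncomputable def poisOrderPMF (μ : ℝ) (r D : ℕ) (y : ℕ) : ℝ :=
  B r D (poisCDFlt μ (y + 1)) - B r D (poisCDFlt μ y)

/-- `MedPois_μ^{(D)} := Pois_μ^{((D+1)/2, D)}` for odd `D`; here `D = 2n+1` and the
median rank is `n + 1`. -/
noncomputable def medPoisPMF (μ : ℝ) (D : ℕ) (y : ℕ) : ℝ := poisOrderPMF μ ((D + 1) / 2) D y

section AuxMedPois


noncomputable def ff (n k : ℕ) : ℝ := (n:ℝ)^k / (Nat.factorial k : ℝ)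

lemma ff_pos {n : ℕ} (hn : 1 ≤ n) (k : ℕ) : 0 < ff n k := by
  apply div_pos (pow_pos _ _) (by positivity)
  exact_mod_cast hn

lemma ff_nonneg (n k : ℕ) : 0 ≤ ff n k := by
  apply div_nonneg (by positivity) (by positivity)

lemma ff_succ (n k : ℕ) : ff n (k+1) = ff n k * ((n:ℝ) / (k+1)) := by
  unfold ff
  rw [Nat.factorial_succ]
  push_cast
  field_simp
  ring

lemma hasSum_ff (n : ℕ) : HasSum (ff n) (Real.exp n) := by
  rw [Real.exp_eq_exp_ℝ]
  exact NormedSpace.expSeries_div_hasSum_exp (n:ℝ)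

-- ℕ inequality 1 : (n+d)! ≤ n^(2d+1) * (n-1-d)!
lemma nat1 {n : ℕ} (hn : 1 ≤ n) : ∀ d, d ≤ n - 1 →
    Nat.factorial (n + d) ≤ n ^ (2*d+1) * Nat.factorial (n - 1 - d) := by
  intro d
  induction d with
  | zero =>
    intro _
    have h : Nat.factorial n = n * Nat.factorial (n-1) := by
      conv_lhs => rw [show n = (n-1)+1 by omega]
      rw [Nat.factorial_succ]
      congr 1
      omega
    simp only [Nat.add_zero, Nat.sub_zero, pow_one, Nat.mul_zero, Nat.zero_add]
    exact le_of_eq h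
  | succ d ih =>
    intro hd
    have hd' : d ≤ n - 1 := by omega
    have h1 : Nat.factorial (n + (d+1)) = (n + d + 1) * Nat.factorial (n + d) := by
      rw [show n + (d+1) = (n+d)+1 by ring, Nat.factorial_succ]
    have h2 : Nat.factorial (n - 1 - d) = (n - 1 - d) * Nat.factorial (n - 1 - (d+1)) := by
      have : n - 1 - d = (n - 1 - (d+1)) + 1 := by omega
      rw [this, Nat.factorial_succ]
    calc Nat.factorial (n + (d+1)) = (n + d + 1) * Nat.factorial (n + d) := h1
      _ ≤ (n + d + 1) * (n ^ (2*d+1) * Nat.factorial (n - 1 - d)) :=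
          Nat.mul_le_mul_left _ (ih hd')
      _ = ((n + d + 1) * (n - 1 - d)) * (n ^ (2*d+1) * Nat.factorial (n - 1 - (d+1))) := by
          rw [h2]; ring
      _ ≤ (n * n) * (n ^ (2*d+1) * Nat.factorial (n - 1 - (d+1))) := by
          apply Nat.mul_le_mul_right
          -- (n + d + 1) * (n - 1 - d) ≤ n * n
          have h3 : n - 1 - d = n - (d+1) := by omega
          rw [h3]
          have hdn : d + 1 ≤ n := by omega
          zify [hdn]
          nlinarith [sq_nonneg ((d:ℤ)+1)]
      _ = n ^ (2*(d+1)+1) * Nat.factorial (n - 1 - (d+1)) := by ring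

-- reflection inequality : for k < n, ff n k ≤ ff n (2n-1-k)
lemma ff_reflect {n : ℕ} (hn : 1 ≤ n) {k : ℕ} (hk : k < n) :
    ff n k ≤ ff n (2*n-1-k) := by
  set d := n - 1 - k with hd
  have hk' : k = n - 1 - d := by omega
  have hm : 2*n-1-k = n + d := by omega
  have hdd : d ≤ n - 1 := by omega
  have key := nat1 hn d hdd
  rw [hm, hk']
  unfold ff
  rw [div_le_div_iff₀ (by positivity) (by positivity)]
  have hcast : ((n:ℝ))^(n+d) = (n:ℝ)^(n-1-d) * (n:ℝ)^(2*d+1) := by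
    rw [← pow_add]; congr 1; omega
  rw [hcast]
  have : ((Nat.factorial (n+d) : ℝ)) ≤ (n:ℝ)^(2*d+1) * (Nat.factorial (n-1-d) : ℝ) := by
    exact_mod_cast key
  calc (n:ℝ)^(n-1-d) * (Nat.factorial (n+d):ℝ)
      ≤ (n:ℝ)^(n-1-d) * ((n:ℝ)^(2*d+1) * (Nat.factorial (n-1-d):ℝ)) := by
        apply mul_le_mul_of_nonneg_left this (by positivity)
    _ = (n:ℝ)^(n-1-d) * (n:ℝ)^(2*d+1) * (Nat.factorial (n-1-d):ℝ) := by ring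

-- Theorem B : 2 * ∑_{k<n} ff n k < exp n
theorem thmB {n : ℕ} (hn : 1 ≤ n) :
    2 * ∑ k ∈ range n, ff n k < Real.exp n := by
  have h1 : ∑ k ∈ range n, ff n k ≤ ∑ k ∈ Ico n (2*n), ff n k := by
    have e1 : ∑ k ∈ range n, ff n (2*n-1-k) = ∑ k ∈ Ico n (2*n), ff n k := by
      apply Finset.sum_nbij' (fun k => 2*n-1-k) (fun k => 2*n-1-k)
      · intro a ha; simp only [mem_range] at ha; simp only [mem_Ico]; omega
      · intro a ha; simp only [mem_Ico] at ha; simp only [mem_range]; omega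
      · intro a ha; simp only [mem_range] at ha; omega
      · intro a ha; simp only [mem_Ico] at ha; omega
      · intro a _; rfl
    rw [← e1]
    apply Finset.sum_le_sum
    intro k hk
    exact ff_reflect hn (mem_range.mp hk)
  have h2 : ∑ k ∈ range n, ff n k + ∑ k ∈ Ico n (2*n), ff n k = ∑ k ∈ range (2*n), ff n k := by
    rw [range_eq_Ico, range_eq_Ico]
    exact Finset.sum_Ico_consecutive _ (by omega) (by omega)
  have h3 : ∑ k ∈ range (2*n), ff n k < ∑ k ∈ range (2*n+1), ff n k := by
    rw [Finset.sum_range_succ]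
    linarith [ff_pos hn (2*n)]
  have h4 : ∑ k ∈ range (2*n+1), ff n k ≤ Real.exp n :=
    sum_le_hasSum _ (fun i _ => ff_nonneg n i) (hasSum_ff n)
  linarith


lemma nat2 {n : ℕ} : ∀ j, 1 ≤ j → j*j ≤ n →
    n^(2*j) * Nat.factorial (n-j) < Nat.factorial (n+j) := by
  intro j hj1
  induction j, hj1 using Nat.le_induction with
  | base =>
    intro hn
    simp only [Nat.mul_one] at hn
    have e : Nat.factorial (n+1) = (n+1) * (n * Nat.factorial (n-1)) := by
      rw [Nat.factorial_succ, Nat.mul_factorial_pred (by omega)]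
    rw [e]
    have h2 : n^(2*1) = n * n := by ring
    rw [h2]
    have : n * n < (n+1) * n := by
      apply Nat.mul_lt_mul_of_pos_right (by omega) (by omega)
    calc n * n * Nat.factorial (n-1) < ((n+1) * n) * Nat.factorial (n-1) :=
          Nat.mul_lt_mul_of_pos_right this (Nat.factorial_pos _)
      _ = (n+1) * (n * Nat.factorial (n-1)) := by ring
  | succ j hj ih =>
    intro h
    have hjn : j*j ≤ n := by nlinarith
    have hkey := ih hjn
    have hj1n : j + 1 ≤ n := by nlinarith
    have e1 : Nat.factorial (n + (j+1)) = (n+j+1) * Nat.factorial (n+j) := by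
      rw [show n+(j+1) = (n+j)+1 by omega, Nat.factorial_succ]
    have e2 : Nat.factorial (n - j) = (n-j) * Nat.factorial (n-(j+1)) := by
      conv_lhs => rw [show n - j = (n-(j+1))+1 by omega]
      rw [Nat.factorial_succ]
      congr 1
      omega
    have hnn : n * n ≤ (n+j+1)*(n-j) := by
      zify [hj1n, show j ≤ n by omega]
      nlinarith
    calc n^(2*(j+1)) * Nat.factorial (n-(j+1))
        = (n*n) * (n^(2*j) * Nat.factorial (n-(j+1))) := by ring
      _ ≤ ((n+j+1)*(n-j)) * (n^(2*j) * Nat.factorial (n-(j+1))) :=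
          Nat.mul_le_mul_right _ hnn
      _ = (n+j+1) * (n^(2*j) * ((n-j) * Nat.factorial (n-(j+1)))) := by ring
      _ = (n+j+1) * (n^(2*j) * Nat.factorial (n-j)) := by rw [← e2]
      _ < (n+j+1) * Nat.factorial (n+j) := by
          apply Nat.mul_lt_mul_of_le_of_lt (le_refl _) hkey (by omega)
      _ = Nat.factorial (n + (j+1)) := e1.symm

section A

variable {n : ℕ} (hn : 1 ≤ n)
include hn
set_option linter.unusedSectionVars false

-- upper-tail sequence
noncomputable def aa (n j : ℕ) : ℝ := ff n (n + j)
-- lower-tail sequence (with cutoff)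
noncomputable def bb (n j : ℕ) : ℝ := if j ≤ n then ff n (n - j) else 0

lemma ff_pos' (k : ℕ) : 0 < ff n k := by
  unfold ff
  apply div_pos (pow_pos _ _) (by positivity)
  exact_mod_cast hn

lemma ff_nonneg' (k : ℕ) : 0 ≤ ff n k := le_of_lt (ff_pos' hn k)

omit hn in
lemma ff_succ' (k : ℕ) : ff n (k+1) = ff n k * ((n:ℝ) / (k+1)) := by
  unfold ff
  rw [Nat.factorial_succ]
  push_cast
  field_simp
  ring

omit hn in
lemma aa_succ (j : ℕ) : aa n (j+1) = aa n j * ((n:ℝ) / (n+j+1)) := by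
  unfold aa
  rw [show n + (j+1) = (n+j)+1 by ring, ff_succ']
  push_cast
  ring_nf

lemma aa_pos (j : ℕ) : 0 < aa n j := ff_pos' hn _

lemma aa_le_geom : ∀ j, aa n j ≤ ff n n * ((n:ℝ)/(n+1))^j := by
  intro j
  induction j with
  | zero => simp [aa]
  | succ j ih =>
    rw [aa_succ, pow_succ]
    have h1 : (n:ℝ)/(n+j+1) ≤ (n:ℝ)/(n+1) := by
      apply div_le_div_of_nonneg_left (by positivity) (by positivity)
      push_cast; linarith [Nat.cast_nonneg (α := ℝ) j]
    have h2 : (0:ℝ) ≤ (n:ℝ)/(n+j+1) := by positivity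
    calc aa n j * ((n:ℝ)/(n+j+1)) ≤ (ff n n * ((n:ℝ)/(n+1))^j) * ((n:ℝ)/(n+j+1)) := by
          apply mul_le_mul_of_nonneg_right ih h2
      _ ≤ (ff n n * ((n:ℝ)/(n+1))^j) * ((n:ℝ)/(n+1)) := by
          apply mul_le_mul_of_nonneg_left h1
          exact mul_nonneg (ff_nonneg' hn n) (pow_nonneg (by positivity) j)
      _ = ff n n * (((n:ℝ)/(n+1))^j * ((n:ℝ)/(n+1))) := by ring

omit hn in
lemma geom_lt_one : (n:ℝ)/(n+1) < 1 := by
  rw [div_lt_one (by positivity)]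
  linarith

omit hn in
lemma geom_nonneg : (0:ℝ) ≤ (n:ℝ)/(n+1) := by positivity

lemma summable_aa : Summable (aa n) := by
  apply Summable.of_nonneg_of_le (fun j => le_of_lt (aa_pos hn j)) (aa_le_geom hn)
  exact (summable_geometric_of_lt_one (geom_nonneg (n := n)) (geom_lt_one (n := n))).mul_left _

lemma tendsto_aa_zero : Tendsto (aa n) atTop (nhds 0) := (summable_aa hn).tendsto_atTop_zero

-- telescoping for aa : (j+1) * aa (j+1) = n * (aa j - aa (j+1))
omit hn in
lemma aa_tel (j : ℕ) : ((j:ℝ)+1) * aa n (j+1) = n * (aa n j - aa n (j+1)) := by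
  rw [aa_succ]
  have h : ((n:ℝ)+j+1) ≠ 0 := by positivity
  field_simp
  ring

omit hn in
lemma aa_tel_sum (N : ℕ) :
    ∑ j ∈ range N, ((j:ℝ)+1) * aa n (j+1) = n * (aa n 0 - aa n N) := by
  induction N with
  | zero => simp
  | succ N ih =>
    rw [Finset.sum_range_succ, ih, aa_tel]
    ring

lemma hasSum_jaa : HasSum (fun j : ℕ => ((j:ℝ)+1) * aa n (j+1)) (n * ff n n) := by
  rw [hasSum_iff_tendsto_nat_of_nonneg]
  · have h1 : Tendsto (fun N => (n:ℝ) * (aa n 0 - aa n N)) atTop (nhds ((n:ℝ) * (aa n 0 - 0))) := by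
      exact (tendsto_const_nhds.sub (tendsto_aa_zero hn)).const_mul _
    simp only [sub_zero] at h1
    have : aa n 0 = ff n n := by simp [aa]
    rw [← this]
    apply Tendsto.congr' _ h1
    filter_upwards with N
    rw [aa_tel_sum]
  · intro j
    have := aa_pos hn (n := n) (j+1)
    positivity

lemma summable_jaa : Summable (fun j : ℕ => ((j:ℝ)+1) * aa n (j+1)) := (hasSum_jaa hn).summable

lemma tsum_jaa : ∑' (j : ℕ), ((j:ℝ)+1) * aa n (j+1) = n * ff n n := (hasSum_jaa hn).tsum_eq

-- bb facts
lemma bb_nonneg (j : ℕ) : 0 ≤ bb n j := by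
  unfold bb
  split
  · exact ff_nonneg' hn _
  · exact le_refl 0


omit hn in
lemma bb_zero {j : ℕ} (h : n < j) : bb n j = 0 := by
  unfold bb
  rw [if_neg (by omega)]

lemma bb_eq {j : ℕ} (h : j ≤ n) : bb n j = ff n (n - j) := by
  unfold bb
  rw [if_pos h]

-- recurrence for bb (for j < n)
lemma bb_succ {j : ℕ} (h : j < n) : bb n (j+1) = bb n j * (((n - j : ℕ):ℝ)/n) := by
  rw [bb_eq hn (by omega), bb_eq hn (by omega)]
  have h1 := ff_succ' (n := n) (n - (j+1))
  have h2 : (n - (j+1)) + 1 = n - j := by omega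
  rw [h2] at h1
  have h5 : ((n - (j+1) : ℕ) : ℝ) + 1 = ((n - j : ℕ) : ℝ) := by exact_mod_cast congrArg (Nat.cast (R := ℝ)) h2
  rw [h5] at h1
  have h4 : ((n - j : ℕ) : ℝ) ≠ 0 := by
    have : 0 < n - j := by omega
    positivity
  have hn0 : (n:ℝ) ≠ 0 := by
    have : 0 < n := hn
    positivity
  rw [h1]
  field_simp

-- telescoping for bb
lemma bb_tel (j : ℕ) : ((j:ℝ)+1) * bb n (j+1) = n * (bb n (j+1) - bb n ((j+1)+1)) := by
  rcases lt_trichotomy (j+1) n with h | h | h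
  · rw [bb_succ hn h]
    have hc : ((n - (j+1) : ℕ) : ℝ) = (n:ℝ) - (j:ℝ) - 1 := by
      push_cast [Nat.cast_sub (show j+1 ≤ n by omega)]
      ring
    rw [hc]
    have hn0 : (n:ℝ) ≠ 0 := by
      have : 0 < n := hn
      positivity
    field_simp
    ring
  · have e2 : bb n ((j+1)+1) = 0 := bb_zero (by omega)
    rw [e2]
    have : ((j:ℝ)+1) = (n:ℝ) := by exact_mod_cast h
    rw [this]
    ring
  · have e1 : bb n (j+1) = 0 := bb_zero (by omega)
    have e2 : bb n ((j+1)+1) = 0 := bb_zero (by omega)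
    rw [e1, e2]
    ring

lemma bb_tel_sum (N : ℕ) :
    ∑ j ∈ range N, ((j:ℝ)+1) * bb n (j+1) = n * (bb n 1 - bb n (N+1)) := by
  induction N with
  | zero => simp
  | succ N ih =>
    rw [Finset.sum_range_succ, ih, bb_tel hn]
    ring

lemma ff_top : ff n n = ff n (n-1) := by
  have h := ff_succ' (n := n) (n-1)
  have h2 : (n-1) + 1 = n := by omega
  rw [h2] at h
  rw [h]
  have : ((n - 1 : ℕ) : ℝ) + 1 = (n:ℝ) := by
    push_cast [Nat.cast_sub hn]
    ring
  rw [this, div_self (by positivity : (n:ℝ) ≠ 0), mul_one]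

lemma jbb_support (j : ℕ) (hj : j ∉ range n) : ((j:ℝ)+1) * bb n (j+1) = 0 := by
  rw [bb_zero (by simp only [mem_range] at hj; omega), mul_zero]

lemma bb_shift_support (j : ℕ) (hj : j ∉ range n) : bb n (j+1) = 0 :=
  bb_zero (by simp only [mem_range] at hj; omega)

lemma summable_jbb : Summable (fun j : ℕ => ((j:ℝ)+1) * bb n (j+1)) :=
  summable_of_ne_finset_zero (s := range n) (jbb_support hn)

lemma summable_bbs : Summable (fun j : ℕ => bb n (j+1)) :=
  summable_of_ne_finset_zero (s := range n) (bb_shift_support hn)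

lemma tsum_jbb : ∑' (j : ℕ), ((j:ℝ)+1) * bb n (j+1) = n * ff n n := by
  rw [tsum_eq_sum (jbb_support hn), bb_tel_sum hn,
    bb_zero (n := n) (j := n+1) (by omega), bb_eq hn (show (1:ℕ) ≤ n from hn), ff_top hn]
  ring

lemma tsum_bbs : ∑' (j : ℕ), bb n (j+1) = ∑ k ∈ range n, ff n k := by
  rw [tsum_eq_sum (bb_shift_support hn)]
  have : ∀ j ∈ range n, bb n (j+1) = ff n (n - 1 - j) := by
    intro j hj
    simp only [mem_range] at hj
    rw [bb_eq hn (by omega)]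
    congr 1
    omega
  rw [Finset.sum_congr rfl this, Finset.sum_range_reflect]

-- crossing step
lemma cross_step {j : ℕ} (hj : 1 ≤ j) (h : bb n j ≤ aa n j) : bb n (j+1) ≤ aa n (j+1) := by
  by_cases hjn : n ≤ j
  · rw [bb_zero (by omega)]
    exact le_of_lt (aa_pos hn _)
  · push_neg at hjn
    by_cases hc : n ≤ j*(j+1)
    · rw [bb_succ hn hjn, aa_succ]
      have hbj : 0 ≤ bb n j := bb_nonneg hn j
      have hcast : ((n - j : ℕ):ℝ) = (n:ℝ) - (j:ℝ) := by
        push_cast [Nat.cast_sub (le_of_lt hjn)]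
        ring
      have hfrac : ((n - j : ℕ):ℝ)/n ≤ (n:ℝ)/(n+j+1) := by
        rw [hcast, div_le_div_iff₀ (by exact_mod_cast hn) (by positivity)]
        have hcast2 : (j:ℝ)*(j+1) ≥ (n:ℝ) := by exact_mod_cast hc
        nlinarith [Nat.cast_nonneg (α := ℝ) j]
      have hfrac0 : (0:ℝ) ≤ ((n - j : ℕ):ℝ)/n := by positivity
      calc bb n j * (((n - j : ℕ):ℝ)/n) ≤ aa n j * (((n - j : ℕ):ℝ)/n) :=
            mul_le_mul_of_nonneg_right h hfrac0
        _ ≤ aa n j * ((n:ℝ)/(n+j+1)) :=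
            mul_le_mul_of_nonneg_left hfrac (le_of_lt (aa_pos hn j))
    · exfalso
      push_neg at hc
      have hjj : j*j ≤ n := by nlinarith
      have hkey := nat2 j hj hjj
      have hlt : aa n j < bb n j := by
        rw [bb_eq hn (le_of_lt hjn)]
        unfold aa ff
        rw [div_lt_div_iff₀ (by positivity) (by positivity)]
        have hsplit : n + j = (n - j) + 2*j := by omega
        have hpow : (n:ℝ)^(n+j) = (n:ℝ)^(n-j) * (n:ℝ)^(2*j) := by
          rw [hsplit, pow_add]
        rw [hpow]
        have hc2 : ((n:ℝ)^(2*j) * (Nat.factorial (n-j) : ℝ)) < (Nat.factorial (n+j) : ℝ) := by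
          exact_mod_cast hkey
        calc (n:ℝ)^(n-j) * (n:ℝ)^(2*j) * (Nat.factorial (n-j) : ℝ)
            = (n:ℝ)^(n-j) * ((n:ℝ)^(2*j) * (Nat.factorial (n-j) : ℝ)) := by ring
          _ < (n:ℝ)^(n-j) * (Nat.factorial (n+j) : ℝ) := by
              apply mul_lt_mul_of_pos_left hc2
              apply pow_pos
              exact_mod_cast hn
      exact absurd h (not_le.mpr hlt)

lemma summable_aas : Summable (fun j : ℕ => aa n (j+1)) := by
  have := summable_aa hn
  exact (summable_nat_add_iff 1).mpr this

-- the key comparison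
lemma Sa_le_Sb : ∑' (j : ℕ), aa n (j+1) ≤ ∑ k ∈ range n, ff n k := by
  have hex : ∃ j, 1 ≤ j ∧ bb n j ≤ aa n j :=
    ⟨n+1, by omega, by rw [bb_zero (by omega)]; exact le_of_lt (aa_pos hn _)⟩
  set j0 := Nat.find hex with hj0
  obtain ⟨hj01, hj0le⟩ := Nat.find_spec hex
  have hup : ∀ j, j0 ≤ j → bb n j ≤ aa n j := by
    intro j hj
    induction j, hj using Nat.le_induction with
    | base => exact hj0le
    | succ j hj ih => exact cross_step hn (by omega) ih
  have hdown : ∀ j, 1 ≤ j → j < j0 → aa n j ≤ bb n j := by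
    intro j h1 h2
    have := Nat.find_min hex h2
    push_neg at this
    exact le_of_lt (this h1)
  have hpt : ∀ j : ℕ, (j0:ℝ) * (aa n (j+1) - bb n (j+1)) ≤ ((j:ℝ)+1) * (aa n (j+1) - bb n (j+1)) := by
    intro j
    rcases le_or_gt j0 (j+1) with hle | hlt
    · have hx : 0 ≤ aa n (j+1) - bb n (j+1) := sub_nonneg.mpr (hup (j+1) hle)
      apply mul_le_mul_of_nonneg_right _ hx
      exact_mod_cast hle
    · have hx : aa n (j+1) - bb n (j+1) ≤ 0 := sub_nonpos.mpr (hdown (j+1) (by omega) hlt)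
      apply mul_le_mul_of_nonpos_right _ hx
      exact_mod_cast le_of_lt hlt
  have hsum_l : Summable (fun j : ℕ => (j0:ℝ) * (aa n (j+1) - bb n (j+1))) :=
    (((summable_aas hn).sub (summable_bbs hn)).mul_left _)
  have hsum_r : Summable (fun j : ℕ => ((j:ℝ)+1) * (aa n (j+1) - bb n (j+1))) := by
    have : (fun j : ℕ => ((j:ℝ)+1) * (aa n (j+1) - bb n (j+1)))
        = fun j : ℕ => ((j:ℝ)+1) * aa n (j+1) - ((j:ℝ)+1) * bb n (j+1) := by
      funext j; ring
    rw [this]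
    exact (summable_jaa hn).sub (summable_jbb hn)
  have hts := Summable.tsum_le_tsum hpt hsum_l hsum_r
  have e_l : ∑' (j : ℕ), (j0:ℝ) * (aa n (j+1) - bb n (j+1))
      = (j0:ℝ) * (∑' (j : ℕ), aa n (j+1) - ∑' (j : ℕ), bb n (j+1)) := by
    rw [tsum_mul_left, Summable.tsum_sub (summable_aas hn) (summable_bbs hn)]
  have e_r : ∑' (j : ℕ), ((j:ℝ)+1) * (aa n (j+1) - bb n (j+1)) = 0 := by
    have : (fun j : ℕ => ((j:ℝ)+1) * (aa n (j+1) - bb n (j+1)))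
        = fun j : ℕ => ((j:ℝ)+1) * aa n (j+1) - ((j:ℝ)+1) * bb n (j+1) := by
      funext j; ring
    rw [this, Summable.tsum_sub (summable_jaa hn) (summable_jbb hn), tsum_jaa hn, tsum_jbb hn]
    ring
  rw [e_l, e_r] at hts
  have hj0pos : (0:ℝ) < (j0:ℝ) := by exact_mod_cast hj01
  have hX : ∑' (j : ℕ), aa n (j+1) - ∑' (j : ℕ), bb n (j+1) ≤ 0 := by
    by_contra hcon
    push_neg at hcon
    nlinarith
  rw [tsum_bbs hn] at hX
  linarith


theorem thmA : Real.exp n < 2 * ∑ k ∈ range (n+1), ff n k := by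
  have hsum := hasSum_ff n
  have hsplit := hsum.summable.sum_add_tsum_nat_add (n+1)
  have htsum : ∑' k, ff n k = Real.exp n := hsum.tsum_eq
  have he : ∑' (j : ℕ), ff n (j + (n+1)) = ∑' (j : ℕ), aa n (j+1) := by
    apply tsum_congr
    intro j
    unfold aa
    congr 1
    omega
  have hSa := Sa_le_Sb hn
  have h2 : ∑ k ∈ range n, ff n k < ∑ k ∈ range (n+1), ff n k := by
    rw [Finset.sum_range_succ]
    linarith [ff_pos' hn (n := n) n]
  rw [htsum, he] at hsplit
  linarith

end A


section Pois

lemma cdf_deriv_aux (N : ℕ) (x : ℝ) :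
    ∑ k ∈ range (N+1), (((k:ℝ) * x^(k-1)) / (Nat.factorial k : ℝ)
      - x^k / (Nat.factorial k : ℝ)) = - (x^N / (Nat.factorial N : ℝ)) := by
  induction N with
  | zero => simp
  | succ N ih =>
    rw [Finset.sum_range_succ, ih]
    have h1 : ((N+1 : ℕ):ℝ) * x^((N+1) - 1) / (Nat.factorial (N+1) : ℝ)
        = x^N / (Nat.factorial N : ℝ) := by
      rw [Nat.factorial_succ, show (N+1)-1 = N from rfl]
      have hk : (Nat.factorial N : ℝ) ≠ 0 := by positivity
      push_cast
      field_simp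
    rw [h1]
    ring

lemma hasDerivAt_cdf (N : ℕ) (x : ℝ) :
    HasDerivAt (fun t => ∑ k ∈ range (N+1), poisPMF t k)
      (-(Real.exp (-x) * (x^N / (Nat.factorial N : ℝ)))) x := by
  have hterm : ∀ k : ℕ, HasDerivAt (fun t => poisPMF t k)
      ((Real.exp (-x) * (-1) * x^k + Real.exp (-x) * ((k:ℝ) * x^(k-1))) / (Nat.factorial k : ℝ)) x := by
    intro k
    have h1 : HasDerivAt (fun t : ℝ => Real.exp (-t)) (Real.exp (-x) * (-1)) x :=
      ((hasDerivAt_id x).neg).exp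
    have h3 := (h1.mul (hasDerivAt_pow k x)).div_const ((Nat.factorial k : ℝ))
    have hfun : (fun t : ℝ => Real.exp (-t) * t^k / (Nat.factorial k : ℝ))
        = fun t => poisPMF t k := by
      funext t
      unfold poisPMF
      ring
    rw [← hfun]
    exact h3
  have hsum : HasDerivAt (fun t => ∑ k ∈ range (N+1), poisPMF t k)
      (∑ k ∈ range (N+1),
        (Real.exp (-x) * (-1) * x^k + Real.exp (-x) * ((k:ℝ) * x^(k-1))) / (Nat.factorial k : ℝ)) x :=
    HasDerivAt.fun_sum (fun k _ => hterm k)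
  have hval : (∑ k ∈ range (N+1),
        (Real.exp (-x) * (-1) * x^k + Real.exp (-x) * ((k:ℝ) * x^(k-1))) / (Nat.factorial k : ℝ))
      = -(Real.exp (-x) * (x^N / (Nat.factorial N : ℝ))) := by
    have haux := cdf_deriv_aux N x
    have hstep : (∑ k ∈ range (N+1),
        (Real.exp (-x) * (-1) * x^k + Real.exp (-x) * ((k:ℝ) * x^(k-1))) / (Nat.factorial k : ℝ))
        = Real.exp (-x) * ∑ k ∈ range (N+1),
          (((k:ℝ) * x^(k-1)) / (Nat.factorial k : ℝ) - x^k / (Nat.factorial k : ℝ)) := by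
      rw [Finset.mul_sum]
      apply Finset.sum_congr rfl
      intro k _
      have hk : (Nat.factorial k : ℝ) ≠ 0 := by positivity
      field_simp
      ring
    rw [hstep, haux]
    ring
  rw [← hval]
  exact hsum

lemma cdf_anti (N : ℕ) {x y : ℝ} (hx : 0 < x) (hxy : x ≤ y) :
    ∑ k ∈ range (N+1), poisPMF y k ≤ ∑ k ∈ range (N+1), poisPMF x k := by
  rcases eq_or_lt_of_le hxy with rfl | hlt
  · exact le_refl _
  have hanti : StrictAntiOn (fun t => ∑ k ∈ range (N+1), poisPMF t k) (Set.Icc x y) := by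
    apply strictAntiOn_of_deriv_neg (convex_Icc x y)
    · apply Continuous.continuousOn
      have : Differentiable ℝ (fun t => ∑ k ∈ range (N+1), poisPMF t k) :=
        fun t => (hasDerivAt_cdf N t).differentiableAt
      exact this.continuous
    · intro t ht
      rw [interior_Icc] at ht
      rw [(hasDerivAt_cdf N t).deriv]
      have ht0 : 0 < t := lt_trans hx ht.1
      have : 0 < Real.exp (-t) * (t^N / (Nat.factorial N : ℝ)) := by positivity
      linarith
  exact le_of_lt (hanti (Set.left_mem_Icc.mpr hxy) (Set.right_mem_Icc.mpr hxy) hlt)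

lemma pois_eq_ff (n k : ℕ) : poisPMF (n:ℝ) k = Real.exp (-(n:ℝ)) * ff n k := by
  unfold poisPMF ff
  ring

lemma L1 {μ : ℝ} (hμ : 0 < μ) (hfl : 1 ≤ ⌊μ⌋₊) : poisCDFlt μ ⌊μ⌋₊ < 1/2 := by
  set n := ⌊μ⌋₊ with hn
  have hnμ : (n:ℝ) ≤ μ := Nat.floor_le (le_of_lt hμ)
  have hnpos : (0:ℝ) < n := by exact_mod_cast hfl
  have hmono : poisCDFlt μ n ≤ poisCDFlt (n:ℝ) n := by
    unfold poisCDFlt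
    have := cdf_anti (n-1) hnpos hnμ
    rwa [show (n-1)+1 = n from by omega] at this
  have hint : poisCDFlt (n:ℝ) n < 1/2 := by
    unfold poisCDFlt
    have : ∑ k ∈ range n, poisPMF (n:ℝ) k = Real.exp (-(n:ℝ)) * ∑ k ∈ range n, ff n k := by
      rw [Finset.mul_sum]
      exact Finset.sum_congr rfl (fun k _ => pois_eq_ff n k)
    rw [this]
    have hB := thmB hfl
    have hepos : 0 < Real.exp (-(n:ℝ)) := Real.exp_pos _
    have : Real.exp (-(n:ℝ)) * (2 * ∑ k ∈ range n, ff n k) < Real.exp (-(n:ℝ)) * Real.exp (n:ℝ) :=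
      (mul_lt_mul_iff_right₀ hepos).mpr hB
    rw [← Real.exp_add, neg_add_cancel, Real.exp_zero] at this
    linarith
  linarith

lemma L2 {μ : ℝ} (hμ : 0 < μ) : 1/2 < poisCDFlt μ (⌈μ⌉₊ + 1) := by
  set c := ⌈μ⌉₊ with hc
  have hcμ : μ ≤ (c:ℝ) := Nat.le_ceil μ
  have hc1 : 1 ≤ c := by
    rw [hc]
    exact Nat.one_le_ceil_iff.mpr hμ
  have hmono : poisCDFlt (c:ℝ) (c+1) ≤ poisCDFlt μ (c+1) := by
    unfold poisCDFlt
    exact cdf_anti c hμ hcμ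
  have hint : 1/2 < poisCDFlt (c:ℝ) (c+1) := by
    unfold poisCDFlt
    have heq : ∑ k ∈ range (c+1), poisPMF (c:ℝ) k
        = Real.exp (-(c:ℝ)) * ∑ k ∈ range (c+1), ff c k := by
      rw [Finset.mul_sum]
      exact Finset.sum_congr rfl (fun k _ => pois_eq_ff c k)
    rw [heq]
    have hA := thmA hc1
    have hepos : 0 < Real.exp (-(c:ℝ)) := Real.exp_pos _
    have h3 : Real.exp (-(c:ℝ)) * Real.exp (c:ℝ)
        < Real.exp (-(c:ℝ)) * (2 * ∑ k ∈ range (c+1), ff c k) :=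
      (mul_lt_mul_iff_right₀ hepos).mpr hA
    rw [← Real.exp_add, neg_add_cancel, Real.exp_zero] at h3
    linarith
  linarith

end Pois



lemma choose_reflect (n : ℕ) :
    ∑ t ∈ Icc (n+1) (2*n+1), (2*n+1).choose t = ∑ t ∈ range (n+1), (2*n+1).choose t := by
  apply Finset.sum_nbij' (fun t => 2*n+1-t) (fun t => 2*n+1-t)
  · intro a ha; simp only [mem_Icc] at ha; simp only [mem_range]; omega
  · intro a ha; simp only [mem_range] at ha; simp only [mem_Icc]; omega
  · intro a ha; simp only [mem_Icc] at ha; omega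
  · intro a ha; simp only [mem_range] at ha; omega
  · intro a ha
    simp only [mem_Icc] at ha
    rw [← Nat.choose_symm (by omega : 2*n+1-a ≤ 2*n+1)]
    congr 1
    omega

lemma sum_choose_lower (n : ℕ) :
    ∑ t ∈ range (n+1), (2*n+1).choose t = 2^(2*n) := by
  have htot : ∑ t ∈ range (2*n+1+1), (2*n+1).choose t = 2^(2*n+1) := Nat.sum_range_choose (2*n+1)
  have hsplit : ∑ t ∈ range (n+1), (2*n+1).choose t + ∑ t ∈ Icc (n+1) (2*n+1), (2*n+1).choose t
      = ∑ t ∈ range (2*n+1+1), (2*n+1).choose t := by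
    rw [range_eq_Ico, range_eq_Ico, show Icc (n+1) (2*n+1) = Ico (n+1) (2*n+1+1) from by
      rw [Finset.Ico_add_one_right_eq_Icc]]
    exact Finset.sum_Ico_consecutive _ (by omega) (by omega)
  rw [choose_reflect] at hsplit
  have h2 : 2^(2*n+1) = 2^(2*n) + 2^(2*n) := by rw [pow_succ]; ring
  omega

lemma sum_choose_upper (n : ℕ) :
    ∑ t ∈ Icc (n+1) (2*n+1), (2*n+1).choose t = 2^(2*n) := by
  rw [choose_reflect]; exact sum_choose_lower n

lemma binom_total (D : ℕ) (q : ℝ) :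
    ∑ t ∈ range (D+1), (D.choose t : ℝ) * q^t * (1-q)^(D-t) = 1 := by
  have h := add_pow q (1-q) D
  simp only [add_sub_cancel, one_pow] at h
  conv_rhs => rw [h]
  apply Finset.sum_congr rfl
  intro t _
  ring

lemma B_eq_one_sub (n : ℕ) (q : ℝ) : B (n+1) (2*n+1) q
    = 1 - ∑ t ∈ range (n+1), ((2*n+1).choose t : ℝ) * q^t * (1-q)^(2*n+1-t) := by
  have hsplit : ∑ t ∈ range (n+1), ((2*n+1).choose t : ℝ) * q^t * (1-q)^(2*n+1-t)
      + ∑ t ∈ Icc (n+1) (2*n+1), ((2*n+1).choose t : ℝ) * q^t * (1-q)^(2*n+1-t)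
      = ∑ t ∈ range (2*n+1+1), ((2*n+1).choose t : ℝ) * q^t * (1-q)^(2*n+1-t) := by
    rw [range_eq_Ico, range_eq_Ico, show Icc (n+1) (2*n+1) = Ico (n+1) (2*n+1+1) from by
      rw [Finset.Ico_add_one_right_eq_Icc]]
    exact Finset.sum_Ico_consecutive _ (by omega) (by omega)
  rw [binom_total (2*n+1) q] at hsplit
  unfold B
  linarith

lemma B_half (n : ℕ) : B (n+1) (2*n+1) (1/2 : ℝ) = 1/2 := by
  unfold B
  have hterm : ∀ t ∈ Icc (n+1) (2*n+1),
      ((2*n+1).choose t : ℝ) * (1/2:ℝ)^t * (1-(1/2:ℝ))^(2*n+1-t)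
      = ((2*n+1).choose t : ℝ) * (1/2:ℝ)^(2*n+1) := by
    intro t ht
    simp only [mem_Icc] at ht
    rw [show (1-(1/2:ℝ)) = 1/2 by norm_num, mul_assoc, ← pow_add]
    congr 2
    omega
  rw [Finset.sum_congr rfl hterm, ← Finset.sum_mul]
  have : (∑ t ∈ Icc (n+1) (2*n+1), ((2*n+1).choose t : ℝ)) = (2:ℝ)^(2*n) := by
    rw [← Nat.cast_sum]
    rw [sum_choose_upper n]
    push_cast
    ring
  rw [this]
  rw [show (1/2:ℝ) = 2⁻¹ by norm_num, inv_pow, pow_succ]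
  field_simp

lemma ratio_lt_one {q : ℝ} (h0 : 0 ≤ q) (h1 : q ≤ 1) (hne : q ≠ 1/2) : 4*q*(1-q) < 1 := by
  have h2 : 2*q - 1 ≠ 0 := by
    intro h
    apply hne
    linarith
  have h3 : 0 < (2*q-1)^2 := lt_of_le_of_ne (sq_nonneg _) (Ne.symm (pow_ne_zero 2 h2))
  nlinarith

lemma ratio_nonneg {q : ℝ} (h0 : 0 ≤ q) (h1 : q ≤ 1) : 0 ≤ 4*q*(1-q) := by nlinarith

lemma B_tendsto_one {q : ℝ} (hq : 1/2 < q) (h1 : q ≤ 1) :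
    Tendsto (fun n : ℕ => B (n+1) (2*n+1) q) atTop (nhds 1) := by
  have h0 : (0:ℝ) ≤ q := by linarith
  have h1q : 0 ≤ 1 - q := by linarith
  have hq1 : 1 - q ≤ q := by linarith
  -- tail bound
  have htail : ∀ n : ℕ, ∑ t ∈ range (n+1), ((2*n+1).choose t : ℝ) * q^t * (1-q)^(2*n+1-t)
      ≤ (1-q) * (4*q*(1-q))^n := by
    intro n
    have hterm : ∀ t ∈ range (n+1), ((2*n+1).choose t : ℝ) * q^t * (1-q)^(2*n+1-t)
        ≤ ((2*n+1).choose t : ℝ) * (q^n * (1-q)^(n+1)) := by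
      intro t ht
      simp only [mem_range] at ht
      have htn : t ≤ n := by omega
      have key : q^t * (1-q)^(2*n+1-t) ≤ q^n * (1-q)^(n+1) := by
        have e1 : 2*n+1-t = (n-t) + (n+1) := by omega
        rw [e1, pow_add, ← mul_assoc]
        have h2 : q^t * (1-q)^(n-t) ≤ q^t * q^(n-t) := by
          apply mul_le_mul_of_nonneg_left _ (pow_nonneg h0 t)
          exact pow_le_pow_left₀ h1q hq1 _
        have h3 : q^t * q^(n-t) = q^n := by
          rw [← pow_add]
          congr 1
          omega
        apply mul_le_mul_of_nonneg_right _ (pow_nonneg h1q (n+1))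
        rw [← h3]
        exact h2
      calc ((2*n+1).choose t : ℝ) * q^t * (1-q)^(2*n+1-t)
          = ((2*n+1).choose t : ℝ) * (q^t * (1-q)^(2*n+1-t)) := by ring
        _ ≤ ((2*n+1).choose t : ℝ) * (q^n * (1-q)^(n+1)) := by
            apply mul_le_mul_of_nonneg_left key (Nat.cast_nonneg _)
    calc ∑ t ∈ range (n+1), ((2*n+1).choose t : ℝ) * q^t * (1-q)^(2*n+1-t)
        ≤ ∑ t ∈ range (n+1), ((2*n+1).choose t : ℝ) * (q^n * (1-q)^(n+1)) :=
          Finset.sum_le_sum hterm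
      _ = (∑ t ∈ range (n+1), ((2*n+1).choose t : ℝ)) * (q^n * (1-q)^(n+1)) := by
          rw [← Finset.sum_mul]
      _ = (2:ℝ)^(2*n) * (q^n * (1-q)^(n+1)) := by
          rw [← Nat.cast_sum, sum_choose_lower n]
          push_cast
          ring
      _ = (1-q) * (4*q*(1-q))^n := by
          rw [mul_pow, mul_pow, pow_succ]
          rw [show (4:ℝ) = 2^2 by norm_num, ← pow_mul]
          ring
  have hnonneg : ∀ n : ℕ, 0 ≤ ∑ t ∈ range (n+1), ((2*n+1).choose t : ℝ) * q^t * (1-q)^(2*n+1-t) := by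
    intro n
    apply Finset.sum_nonneg
    intro t _
    have : (0:ℝ) ≤ ((2*n+1).choose t : ℝ) := Nat.cast_nonneg _
    positivity
  have hgeo : Tendsto (fun n : ℕ => (1-q) * (4*q*(1-q))^n) atTop (nhds 0) := by
    rw [show (0:ℝ) = (1-q) * 0 from by ring]
    apply Tendsto.const_mul
    exact tendsto_pow_atTop_nhds_zero_of_lt_one (ratio_nonneg h0 h1) (ratio_lt_one h0 h1 (ne_of_gt hq))
  have htails : Tendsto (fun n : ℕ => ∑ t ∈ range (n+1), ((2*n+1).choose t : ℝ) * q^t * (1-q)^(2*n+1-t)) atTop (nhds 0) := by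
    apply tendsto_of_tendsto_of_tendsto_of_le_of_le tendsto_const_nhds hgeo hnonneg htail
  have : Tendsto (fun n : ℕ => 1 - ∑ t ∈ range (n+1), ((2*n+1).choose t : ℝ) * q^t * (1-q)^(2*n+1-t)) atTop (nhds (1 - 0)) :=
    tendsto_const_nhds.sub htails
  rw [sub_zero] at this
  apply this.congr
  intro n
  rw [B_eq_one_sub]

lemma B_tendsto_zero {q : ℝ} (h0 : 0 ≤ q) (hq : q < 1/2) :
    Tendsto (fun n : ℕ => B (n+1) (2*n+1) q) atTop (nhds 0) := by
  have h1q : 0 ≤ 1 - q := by linarith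
  have hq1 : q ≤ 1 - q := by linarith
  have hub : ∀ n : ℕ, B (n+1) (2*n+1) q ≤ q * (4*q*(1-q))^n := by
    intro n
    unfold B
    have hterm : ∀ t ∈ Icc (n+1) (2*n+1), ((2*n+1).choose t : ℝ) * q^t * (1-q)^(2*n+1-t)
        ≤ ((2*n+1).choose t : ℝ) * (q^(n+1) * (1-q)^n) := by
      intro t ht
      simp only [mem_Icc] at ht
      have key : q^t * (1-q)^(2*n+1-t) ≤ q^(n+1) * (1-q)^n := by
        have e1 : t = (n+1) + (t - (n+1)) := by omega
        have e2 : q^t = q^(n+1) * q^(t-(n+1)) := by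
          conv_lhs => rw [e1]
          rw [pow_add]
        rw [e2, mul_assoc]
        apply mul_le_mul_of_nonneg_left _ (pow_nonneg h0 (n+1))
        have h2 : q^(t-(n+1)) * (1-q)^(2*n+1-t) ≤ (1-q)^(t-(n+1)) * (1-q)^(2*n+1-t) := by
          apply mul_le_mul_of_nonneg_right _ (pow_nonneg h1q _)
          exact pow_le_pow_left₀ h0 hq1 _
        have h3 : (1-q)^(t-(n+1)) * (1-q)^(2*n+1-t) = (1-q)^n := by
          rw [← pow_add]
          congr 1
          omega
        rw [← h3]
        exact h2
      calc ((2*n+1).choose t : ℝ) * q^t * (1-q)^(2*n+1-t)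
          = ((2*n+1).choose t : ℝ) * (q^t * (1-q)^(2*n+1-t)) := by ring
        _ ≤ ((2*n+1).choose t : ℝ) * (q^(n+1) * (1-q)^n) :=
            mul_le_mul_of_nonneg_left key (Nat.cast_nonneg _)
    calc ∑ t ∈ Icc (n+1) (2*n+1), ((2*n+1).choose t : ℝ) * q^t * (1-q)^(2*n+1-t)
        ≤ ∑ t ∈ Icc (n+1) (2*n+1), ((2*n+1).choose t : ℝ) * (q^(n+1) * (1-q)^n) :=
          Finset.sum_le_sum hterm
      _ = (∑ t ∈ Icc (n+1) (2*n+1), ((2*n+1).choose t : ℝ)) * (q^(n+1) * (1-q)^n) := by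
          rw [← Finset.sum_mul]
      _ = (2:ℝ)^(2*n) * (q^(n+1) * (1-q)^n) := by
          rw [← Nat.cast_sum, sum_choose_upper n]
          push_cast
          ring
      _ = q * (4*q*(1-q))^n := by
          rw [mul_pow, mul_pow, pow_succ]
          rw [show (4:ℝ) = 2^2 by norm_num, ← pow_mul]
          ring
  have hlb : ∀ n : ℕ, 0 ≤ B (n+1) (2*n+1) q := by
    intro n
    unfold B
    apply Finset.sum_nonneg
    intro t _
    have : (0:ℝ) ≤ ((2*n+1).choose t : ℝ) := Nat.cast_nonneg _
    positivity
  have hgeo : Tendsto (fun n : ℕ => q * (4*q*(1-q))^n) atTop (nhds 0) := by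
    rw [show (0:ℝ) = q * 0 from by ring]
    apply Tendsto.const_mul
    exact tendsto_pow_atTop_nhds_zero_of_lt_one (ratio_nonneg h0 (by linarith)) (ratio_lt_one h0 (by linarith) (ne_of_lt hq))
  exact tendsto_of_tendsto_of_tendsto_of_le_of_le tendsto_const_nhds hgeo hlb hub

end AuxMedPois

/-- **Proposition 3.5** (large-`D` limit of the MedPoisson): for `μ > 0`, as `D = 2n+1 → ∞`
through odd values, `MedPois_μ^{(D)}` converges pointwise either to a point mass at some
`m ∈ {⌊μ⌋, ⌈μ⌉}`, or to the uniform distribution on two consecutive integers `{m, m+1}`,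
at least one of which is `⌊μ⌋` or `⌈μ⌉`. -/
theorem medpois_large_D_limit (μ : ℝ) (hμ : 0 < μ) :
    (∃ m : ℕ, (m = ⌊μ⌋₊ ∨ m = ⌈μ⌉₊) ∧ ∀ y : ℕ,
      Filter.Tendsto (fun n : ℕ => medPoisPMF μ (2 * n + 1) y) Filter.atTop
        (nhds (if y = m then (1 : ℝ) else 0))) ∨
    (∃ m : ℕ, (m = ⌊μ⌋₊ ∨ m = ⌈μ⌉₊ ∨ m + 1 = ⌊μ⌋₊ ∨ m + 1 = ⌈μ⌉₊) ∧ ∀ y : ℕ,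
      Filter.Tendsto (fun n : ℕ => medPoisPMF μ (2 * n + 1) y) Filter.atTop
        (nhds (if y = m ∨ y = m + 1 then (1 : ℝ) / 2 else 0))) := by
  classical
  set G := poisCDFlt μ with hGdef
  have hpos : ∀ k, 0 < poisPMF μ k := by
    intro k
    unfold poisPMF
    positivity
  have hasSum1 : HasSum (poisPMF μ) 1 := by
    have h1 : HasSum (fun k : ℕ => μ^k / (Nat.factorial k : ℝ)) (Real.exp μ) := by
      rw [Real.exp_eq_exp_ℝ]
      exact NormedSpace.expSeries_div_hasSum_exp μ
    have h2 := h1.mul_left (Real.exp (-μ))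
    rw [← Real.exp_add, neg_add_cancel, Real.exp_zero] at h2
    have he : (fun k : ℕ => Real.exp (-μ) * (μ^k / (Nat.factorial k : ℝ))) = poisPMF μ := by
      funext k
      unfold poisPMF
      ring
    rwa [he] at h2
  have hGmono : ∀ {y z : ℕ}, y ≤ z → G y ≤ G z := by
    intro y z h
    apply Finset.sum_le_sum_of_subset_of_nonneg (Finset.range_subset_range.mpr h)
    intro k _ _
    exact le_of_lt (hpos k)
  have hGsucc : ∀ y, G (y+1) = G y + poisPMF μ y := fun y => Finset.sum_range_succ _ y
  have hGstrict : ∀ {y z : ℕ}, y < z → G y < G z := by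
    intro y z h
    have h1 : G y < G (y+1) := by
      rw [hGsucc]
      linarith [hpos y]
    exact lt_of_lt_of_le h1 (hGmono h)
  have hGle1 : ∀ y, G y ≤ 1 := fun y =>
    sum_le_hasSum (Finset.range y) (fun k _ => le_of_lt (hpos k)) hasSum1
  have hGlt1 : ∀ y, G y < 1 := fun y => lt_of_lt_of_le (hGstrict (Nat.lt_succ_self y)) (hGle1 (y+1))
  have hG0 : G 0 = 0 := by
    simp [hGdef, poisCDFlt]
  have hGnonneg : ∀ y, 0 ≤ G y := by
    intro y
    apply Finset.sum_nonneg
    intro k _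
    exact le_of_lt (hpos k)
  have hex : ∃ y : ℕ, 1/2 ≤ G (y+1) := by
    have ht : Filter.Tendsto (fun N : ℕ => ∑ k ∈ Finset.range N, poisPMF μ k)
        Filter.atTop (nhds 1) := hasSum1.tendsto_sum_nat
    obtain ⟨N, hN⟩ := (ht.eventually_const_le (show (1:ℝ)/2 < 1 by norm_num)).exists
    match N, hN with
    | 0, hN => simp at hN; norm_num at hN
    | (y+1), hN => exact ⟨y, hN⟩
  set m := Nat.find hex with hmdef
  have hm_spec : 1/2 ≤ G (m+1) := Nat.find_spec hex
  have hm_min : ∀ y, y < m → G (y+1) < 1/2 := by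
    intro y hy
    have := Nat.find_min hex hy
    linarith [not_le.mp this]
  have hGsmall : ∀ y, y ≤ m → G y < 1/2 := by
    intro y hy
    match y, hy with
    | 0, _ => rw [hG0]; norm_num
    | (z+1), hy => exact hm_min z (by omega)
  have hfloor : ⌊μ⌋₊ ≤ m := by
    by_contra h
    push_neg at h
    have h1 : 1 ≤ ⌊μ⌋₊ := by omega
    have h2 := L1 hμ h1
    have h3 : G (m+1) ≤ G ⌊μ⌋₊ := hGmono (by omega)
    rw [hGdef] at *
    linarith
  have hceil : m ≤ ⌈μ⌉₊ := by
    apply Nat.find_le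
    have := L2 hμ
    rw [hGdef]
    linarith
  have hm_or : m = ⌊μ⌋₊ ∨ m = ⌈μ⌉₊ := by
    have := Nat.ceil_le_floor_add_one μ
    omega
  have hmed : ∀ n y : ℕ, medPoisPMF μ (2*n+1) y
      = B (n+1) (2*n+1) (G (y+1)) - B (n+1) (2*n+1) (G y) := by
    intro n y
    unfold medPoisPMF poisOrderPMF
    rw [show (2*n+1+1)/2 = n+1 from by omega]
  have hB0 : ∀ y, G y < 1/2 → Filter.Tendsto (fun n : ℕ => B (n+1) (2*n+1) (G y))
      Filter.atTop (nhds 0) := fun y h => B_tendsto_zero (hGnonneg y) h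
  have hB1 : ∀ y, 1/2 < G y → Filter.Tendsto (fun n : ℕ => B (n+1) (2*n+1) (G y))
      Filter.atTop (nhds 1) := fun y h => B_tendsto_one h (hGle1 y)
  rcases eq_or_lt_of_le hm_spec with heq | hlt
  · -- two-point case : G (m+1) = 1/2
    right
    refine ⟨m, ?_, ?_⟩
    · rcases hm_or with h | h
      · exact Or.inl h
      · exact Or.inr (Or.inl h)
    · intro y
      have hBhalf : Filter.Tendsto (fun n : ℕ => B (n+1) (2*n+1) (G (m+1)))
          Filter.atTop (nhds (1/2)) := by
        have he : (fun n : ℕ => B (n+1) (2*n+1) (G (m+1))) = fun _ : ℕ => (1/2 : ℝ) := by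
          funext n
          rw [← heq, B_half]
        rw [he]
        exact tendsto_const_nhds
      have hGbig : ∀ z, m+2 ≤ z → 1/2 < G z := by
        intro z hz
        calc (1:ℝ)/2 = G (m+1) := heq
          _ < G z := hGstrict (by omega)
      rcases Nat.lt_trichotomy y m with h | h | h
      · rw [if_neg (by omega)]
        have h1 := hB0 (y+1) (hGsmall (y+1) (by omega))
        have h2 := hB0 y (hGsmall y (by omega))
        have h3 := h1.sub h2
        rw [sub_zero] at h3
        exact h3.congr (fun n => (hmed n y).symm)
      · rw [if_pos (Or.inl h), h]
        have h2 := hB0 m (hGsmall m le_rfl)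
        have h3 := hBhalf.sub h2
        rw [sub_zero] at h3
        exact h3.congr (fun n => (hmed n m).symm)
      · rcases eq_or_lt_of_le (show m+1 ≤ y by omega) with h' | h'
        · subst h'
          rw [if_pos (Or.inr rfl)]
          have h1 := hB1 (m+1+1) (hGbig (m+1+1) (by omega))
          have h3 := h1.sub hBhalf
          rw [show (1:ℝ) - 1/2 = 1/2 by norm_num] at h3
          exact h3.congr (fun n => (hmed n (m+1)).symm)
        · rw [if_neg (by omega)]
          have h1 := hB1 (y+1) (hGbig (y+1) (by omega))
          have h2 := hB1 y (hGbig y (by omega))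
          have h3 := h1.sub h2
          rw [sub_self] at h3
          exact h3.congr (fun n => (hmed n y).symm)
  · -- point-mass case : 1/2 < G (m+1)
    left
    refine ⟨m, hm_or, ?_⟩
    intro y
    have hGbig : ∀ z, m+1 ≤ z → 1/2 < G z := by
      intro z hz
      exact lt_of_lt_of_le hlt (hGmono hz)
    rcases Nat.lt_trichotomy y m with h | h | h
    · rw [if_neg (by omega)]
      have h1 := hB0 (y+1) (hGsmall (y+1) (by omega))
      have h2 := hB0 y (hGsmall y (by omega))
      have h3 := h1.sub h2
      rw [sub_zero] at h3
      exact h3.congr (fun n => (hmed n y).symm)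
    · rw [if_pos h, h]
      have h1 := hB1 (m+1) (hGbig (m+1) le_rfl)
      have h2 := hB0 m (hGsmall m le_rfl)
      have h3 := h1.sub h2
      rw [sub_zero] at h3
      exact h3.congr (fun n => (hmed n m).symm)
    · rw [if_neg (by omega)]
      have h1 := hB1 (y+1) (hGbig (y+1) (by omega))
      have h2 := hB1 y (hGbig y (by omega))
      have h3 := h1.sub h2
      rw [sub_self] at h3
      exact h3.congr (fun n => (hmed n y).symm)
end

section
/- (Sufficiency of the count statistics, first part of Lemma 5.1.) Fix Y ∈ ℤ, integers 1 ≤ r ≤ D and 0 ≤ d ≤ D. If (z_1,…,z_d) and (z'_1,…,z'_d) ∈ ℤ^d have the same counts (n1, n2, n3) relative to Y, then P(os_r(Z) = Y ∧ Z_1 = z_1, …, Z_d = z_d) · ∏_{t=1}^d f(z'_t) = P(os_r(Z) = Y ∧ Z_1 = z'_1, …, Z_d = z'_d) · ∏_{t=1}^d f(z_t). In particular, when ∏_t f(z_t) > 0, the conditional probability P(os_r(Z) = Y | Z_1 = z_1, …, Z_d = z_d) depends on (z_1,…,z_d) only through (n1, n2, n3). -/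
open MeasureTheory

/-- The measure on ℤ with mass function `f`. -/
noncomputable def parentMeasure (f : ℤ → ℝ) : Measure ℤ :=
  Measure.count.withDensity fun z => ENNReal.ofReal (f z)

/-- `P f D S` is the probability of the event `S` under the `D`-fold product of the
measure on ℤ with pmf `f`, i.e. the law of `D` i.i.d. draws `Z = (Z_1, …, Z_D)` from `f`. -/
noncomputable def P (f : ℤ → ℝ) (D : ℕ) (S : Set (Fin D → ℤ)) : ℝ :=
  (Measure.pi (fun _ : Fin D => parentMeasure f) S).toReal

/-- The CDF of `f`: `F(y) = ∑_{t ≤ y} f(t)`. -/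
noncomputable def Fcdf (f : ℤ → ℝ) (y : ℤ) : ℝ := ∑' z : {t : ℤ // t ≤ y}, f z.1

/-- The number of entries of `z` that are `≤ y`. -/
def countLe {n : ℕ} (z : Fin n → ℤ) (y : ℤ) : ℕ :=
  (Finset.univ.filter fun i => z i ≤ y).card

/-- `osEq r z Y` says that the `r`-th smallest entry of `z` (counting multiplicity)
equals `Y`: the `r`-th order statistic is `≤ Y` but not `≤ Y - 1`. -/
def osEq {n : ℕ} (r : ℕ) (z : Fin n → ℤ) (Y : ℤ) : Prop :=
  r ≤ countLe z Y ∧ countLe z (Y - 1) < r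

/-- The order-statistic CDF `F^{(a,m)}(y) = ∑_{t=a}^{m} (m choose t) F(y)^t (1−F(y))^{m−t}`. -/
noncomputable def osCDF (f : ℤ → ℝ) (a m : ℕ) (y : ℤ) : ℝ :=
  ∑ t ∈ Finset.Icc a m, (m.choose t : ℝ) * Fcdf f y ^ t * (1 - Fcdf f y) ^ (m - t)

lemma parentMeasure_singleton (f : ℤ → ℝ) (a : ℤ) :
    parentMeasure f {a} = ENNReal.ofReal (f a) := by
  rw [parentMeasure, withDensity_apply _ (measurableSet_singleton a),
    lintegral_singleton, Measure.count_singleton, mul_one]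

lemma parentMeasure_prob (f : ℤ → ℝ) (hf0 : ∀ z, 0 ≤ f z) (hf1 : HasSum f 1) :
    IsProbabilityMeasure (parentMeasure f) := by
  constructor
  rw [parentMeasure, withDensity_apply _ MeasurableSet.univ,
    Measure.restrict_univ, lintegral_count, ← ENNReal.ofReal_one, ← hf1.tsum_eq]
  exact (ENNReal.ofReal_tsum_of_nonneg hf0 hf1.summable).symm

lemma card_filter_equiv {α β : Type*} [Fintype α] [Fintype β] (e : α ≃ β) (Pr : β → Prop)
    [DecidablePred Pr] [DecidablePred fun a => Pr (e a)] :
    (Finset.univ.filter fun a => Pr (e a)).card = (Finset.univ.filter Pr).card := by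
  rw [← Fintype.card_subtype, ← Fintype.card_subtype]
  exact Fintype.card_congr (e.subtypeEquiv (fun a => Iff.rfl))

lemma card_filter_sum {α β : Type*} [Fintype α] [Fintype β] (Pr : α ⊕ β → Prop)
    [DecidablePred Pr] :
    (Finset.univ.filter Pr).card
      = (Finset.univ.filter fun a => Pr (.inl a)).card
        + (Finset.univ.filter fun b => Pr (.inr b)).card := by
  rw [← Fintype.card_subtype, ← Fintype.card_subtype, ← Fintype.card_subtype,
    ← Fintype.card_sum]
  exact Fintype.card_congr (Equiv.subtypeSum)

lemma factor (f : ℤ → ℝ) (hf0 : ∀ z, 0 ≤ f z) (hf1 : HasSum f 1)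
    (D d r : ℕ) (hd : d ≤ D) (Y : ℤ) (z : Fin d → ℤ) :
    P f D {ω | osEq r ω Y ∧ ∀ t : Fin d, ω (Fin.castLE hd t) = z t}
      = (∏ t, f (z t)) *
        (Measure.pi (fun _ : Fin (D - d) => parentMeasure f)
          {w | r ≤ countLe z Y + countLe w Y ∧ countLe z (Y - 1) + countLe w (Y - 1) < r}).toReal := by
  classical
  haveI := parentMeasure_prob f hf0 hf1
  set μ := parentMeasure f with hμ
  set S : Set (Fin D → ℤ) := {ω | osEq r ω Y ∧ ∀ t : Fin d, ω (Fin.castLE hd t) = z t} with hSdef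
  set W : Set (Fin (D - d) → ℤ) :=
    {w | r ≤ countLe z Y + countLe w Y ∧ countLe z (Y - 1) + countLe w (Y - 1) < r} with hWdef
  let e : Fin d ⊕ Fin (D - d) ≃ Fin D :=
    finSumFinEquiv.trans (finCongr (Nat.add_sub_cancel' hd))
  let ψ := MeasurableEquiv.piCongrLeft (fun _ : Fin D => ℤ) e
  let φ := MeasurableEquiv.sumPiEquivProdPi (fun _ : Fin d ⊕ Fin (D - d) => ℤ)
  have mp1 : MeasurePreserving ψ (Measure.pi fun _ => μ) (Measure.pi fun _ => μ) :=
    measurePreserving_piCongrLeft (fun _ => μ) e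
  have mp2 : MeasurePreserving φ.symm
      ((Measure.pi fun _ : Fin d => μ).prod (Measure.pi fun _ : Fin (D - d) => μ))
      (Measure.pi fun _ : Fin d ⊕ Fin (D - d) => μ) :=
    measurePreserving_sumPiEquivProdPi_symm (fun _ : Fin d ⊕ Fin (D - d) => μ)
  have mp := mp1.comp mp2
  have hS : MeasurableSet S := (Set.to_countable S).measurableSet
  have key : (⇑ψ ∘ ⇑φ.symm) ⁻¹' S = ({z} : Set (Fin d → ℤ)) ×ˢ W := by
    ext ⟨x, w⟩
    have hcoord : ∀ s : Fin d ⊕ Fin (D - d), ψ (φ.symm (x, w)) (e s) = Sum.elim x w s := by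
      intro s
      show (Equiv.piCongrLeft (fun _ : Fin D => ℤ) e) (φ.symm (x, w)) (e s) = _
      rw [Equiv.piCongrLeft_apply_apply]
      cases s <;> rfl
    have hcast : ∀ t : Fin d, Fin.castLE hd t = e (Sum.inl t) := by
      intro t; rfl
    have hcount : ∀ y : ℤ, countLe (ψ (φ.symm (x, w))) y = countLe x y + countLe w y := by
      intro y
      have h1 : countLe (ψ (φ.symm (x, w))) y
          = (Finset.univ.filter fun s : Fin d ⊕ Fin (D - d) =>
              ψ (φ.symm (x, w)) (e s) ≤ y).card :=
        (card_filter_equiv e (fun i => ψ (φ.symm (x, w)) i ≤ y)).symm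
      rw [h1]
      have h2 : (Finset.univ.filter fun s : Fin d ⊕ Fin (D - d) =>
              ψ (φ.symm (x, w)) (e s) ≤ y)
          = Finset.univ.filter fun s => Sum.elim x w s ≤ y := by
        apply Finset.filter_congr; intro s _; rw [hcoord s]
      rw [h2, card_filter_sum]
      rfl
    have hmem : (x, w) ∈ (⇑ψ ∘ ⇑φ.symm) ⁻¹' S ↔
        osEq r (ψ (φ.symm (x, w))) Y ∧ ∀ t : Fin d, ψ (φ.symm (x, w)) (Fin.castLE hd t) = z t :=
      Iff.rfl
    rw [hmem]
    have hmem2 : (x, w) ∈ ({z} : Set (Fin d → ℤ)) ×ˢ W ↔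
        x = z ∧ (r ≤ countLe z Y + countLe w Y ∧ countLe z (Y - 1) + countLe w (Y - 1) < r) :=
      Iff.rfl
    rw [hmem2]
    constructor
    · rintro ⟨⟨ha, hb⟩, hc⟩
      have hx : x = z := by
        funext t
        have h := hc t
        rw [hcast t, hcoord (Sum.inl t)] at h
        exact h
      rw [hcount Y, hx] at ha
      rw [hcount (Y - 1), hx] at hb
      exact ⟨hx, ha, hb⟩
    · rintro ⟨hx, ha, hb⟩
      refine ⟨⟨?_, ?_⟩, ?_⟩
      · rw [hcount Y, hx]; exact ha
      · rw [hcount (Y - 1), hx]; exact hb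
      · intro t
        rw [hcast t, hcoord (Sum.inl t)]
        exact congrFun hx t
  have hsing : ({z} : Set (Fin d → ℤ)) = Set.univ.pi (fun i => {z i}) := by
    ext x; simp [funext_iff, Set.mem_univ_pi]
  calc P f D S = ((Measure.pi fun _ : Fin D => μ) S).toReal := rfl
    _ = (((Measure.pi fun _ : Fin d => μ).prod (Measure.pi fun _ : Fin (D - d) => μ))
          ((⇑ψ ∘ ⇑φ.symm) ⁻¹' S)).toReal := by
        rw [mp.measure_preimage hS.nullMeasurableSet]
    _ = ((Measure.pi fun _ : Fin d => μ) {z} * (Measure.pi fun _ : Fin (D - d) => μ) W).toReal := by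
        rw [key, Measure.prod_prod]
    _ = _ := by
        rw [hsing, Measure.pi_pi]
        simp only [hμ, parentMeasure_singleton]
        rw [ENNReal.toReal_mul, ENNReal.toReal_prod]
        congr 1
        exact Finset.prod_congr rfl fun t _ => ENNReal.toReal_ofReal (hf0 _)

lemma countLe_sub_one {d : ℕ} (Y : ℤ) (z : Fin d → ℤ) :
    countLe z (Y - 1) = (Finset.univ.filter fun t => z t < Y).card := by
  unfold countLe
  congr 1
  apply Finset.filter_congr
  intro t _
  simp [Int.le_sub_one_iff]

lemma countLe_split {d : ℕ} (Y : ℤ) (z : Fin d → ℤ) :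
    countLe z Y = (Finset.univ.filter fun t => z t < Y).card
      + (Finset.univ.filter fun t => z t = Y).card := by
  classical
  unfold countLe
  rw [show (Finset.univ.filter fun t => z t ≤ Y)
      = (Finset.univ.filter fun t => z t < Y) ∪ (Finset.univ.filter fun t => z t = Y) by
    rw [← Finset.filter_or]
    apply Finset.filter_congr
    intro t _
    simp [le_iff_lt_or_eq]]
  apply Finset.card_union_of_disjoint
  rw [Finset.disjoint_left]
  intro a ha hb
  simp only [Finset.mem_filter] at ha hb
  omega


/-- **Lemma 5.1, first part** (sufficiency of the count statistics): if two observed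
prefixes `z, z' ∈ ℤ^d` have the same counts of entries `< Y`, `= Y` and `> Y`, then the
joint probabilities of observing the prefix together with `os_r(Z) = Y`, reweighted by the
parent pmf of the other prefix, agree.  In particular the conditional probability
`P(os_r(Z) = Y ∣ Z_1 = z_1, …, Z_d = z_d)` depends on the prefix only through the counts. -/
theorem order_statistic_count_sufficiency
    (f : ℤ → ℝ) (hf0 : ∀ z, 0 ≤ f z) (hf1 : HasSum f 1)
    (Y : ℤ) (D r d : ℕ) (hr1 : 1 ≤ r) (hrD : r ≤ D) (hd : d ≤ D)
    (z z' : Fin d → ℤ)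
    (h1 : (Finset.univ.filter fun t => z t < Y).card
        = (Finset.univ.filter fun t => z' t < Y).card)
    (h2 : (Finset.univ.filter fun t => z t = Y).card
        = (Finset.univ.filter fun t => z' t = Y).card)
    (h3 : (Finset.univ.filter fun t => Y < z t).card
        = (Finset.univ.filter fun t => Y < z' t).card) :
    P f D {ω | osEq r ω Y ∧ ∀ t : Fin d, ω (Fin.castLE hd t) = z t} * ∏ t, f (z' t)
      = P f D {ω | osEq r ω Y ∧ ∀ t : Fin d, ω (Fin.castLE hd t) = z' t} * ∏ t, f (z t) := by
  have hle : countLe z (Y - 1) = countLe z' (Y - 1) := by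
    rw [countLe_sub_one, countLe_sub_one, h1]
  have hY : countLe z Y = countLe z' Y := by
    rw [countLe_split, countLe_split, h1, h2]
  rw [factor f hf0 hf1 D d r hd Y z, factor f hf0 hf1 D d r hd Y z', hle, hY]
  ring
end

section
/- (Conditional independence given categories, Theorem 5.2.) Fix Y ∈ ℤ and 1 ≤ r ≤ D. Let c = (c_1,…,c_D) ∈ {lt, eq, gt}^D be a category pattern with m(c_d) > 0 for every d. Then for every z = (z_1,…,z_D) ∈ ℤ^D with cat(z_d) = c_d for all d: P(Z_1 = z_1, …, Z_D = z_D ∧ os_r(Z) = Y) = P(cat(Z_1) = c_1, …, cat(Z_D) = c_D ∧ os_r(Z) = Y) · ∏_{d=1}^{D} f(z_d)/m(c_d). Consequently, conditional on the category pattern {cat(Z_d) = c_d, d = 1,…,D} (when it has positive probability together with {os_r(Z)=Y}), the vector (Z_1,…,Z_D) is independent of the event {os_r(Z) = Y}, and Z_1,…,Z_D are mutually conditionally independent with Z_d distributed according to the parent pmf f renormalized to {z ∈ ℤ : cat(z) = c_d}. -/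
open MeasureTheory

/-- The three categories of an integer relative to a fixed value `Y`. -/
inductive Cat3 where
  | lt : Cat3
  | eq : Cat3
  | gt : Cat3

/-- The category of `z` relative to `Y`. -/
def catOf (Y z : ℤ) : Cat3 := if z < Y then Cat3.lt else if z = Y then Cat3.eq else Cat3.gt

/-- The probability mass of each category: `m(lt) = F(Y−1)`, `m(eq) = f(Y)`,
`m(gt) = 1 − F(Y)`. -/
noncomputable def catMass (f : ℤ → ℝ) (Y : ℤ) : Cat3 → ℝ
  | Cat3.lt => Fcdf f (Y - 1)
  | Cat3.eq => f Y
  | Cat3.gt => 1 - Fcdf f Y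


lemma parent_apply (f : ℤ → ℝ) (s : Set ℤ) :
    parentMeasure f s = ∑' x : s, ENNReal.ofReal (f x) := by
  rw [parentMeasure, withDensity_apply _ (MeasurableSpace.measurableSet_top),
    lintegral_countable _ s.to_countable]
  simp [Measure.count_singleton]

lemma parent_ofReal (f : ℤ → ℝ) (hf0 : ∀ z, 0 ≤ f z) (hsum : Summable f) (s : Set ℤ) :
    parentMeasure f s = ENNReal.ofReal (∑' x : s, f x) := by
  rw [parent_apply,
    ← ENNReal.ofReal_tsum_of_nonneg (fun x : s => hf0 x) (hsum.subtype s)]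

lemma catOf_lt_iff (Y w : ℤ) : catOf Y w = Cat3.lt ↔ w < Y := by
  unfold catOf; split_ifs with h1 h2 <;> simp_all

lemma catOf_eq_iff (Y w : ℤ) : catOf Y w = Cat3.eq ↔ w = Y := by
  unfold catOf; split_ifs with h1 h2 <;> simp_all; omega

lemma cat_facts {Y a b : ℤ} (h : catOf Y a = catOf Y b) :
    (a < Y ↔ b < Y) ∧ (a = Y ↔ b = Y) := by
  unfold catOf at h
  split_ifs at h <;> simp_all <;> omega

lemma parent_cat (f : ℤ → ℝ) (hf0 : ∀ z, 0 ≤ f z) (hf1 : HasSum f 1) (Y : ℤ) (cc : Cat3) :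
    parentMeasure f {w | catOf Y w = cc} = ENNReal.ofReal (catMass f Y cc) := by
  have hsum : Summable f := hf1.summable
  cases cc with
  | lt =>
    have hset : {w : ℤ | catOf Y w = Cat3.lt} = {w : ℤ | w ≤ Y - 1} := by
      ext w; rw [Set.mem_setOf_eq, Set.mem_setOf_eq, catOf_lt_iff]; omega
    rw [hset, parent_ofReal f hf0 hsum]
    rfl
  | eq =>
    have hset : {w : ℤ | catOf Y w = Cat3.eq} = {Y} := by
      ext w; rw [Set.mem_setOf_eq, Set.mem_singleton_iff, catOf_eq_iff]
    rw [hset, parent_apply]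
    exact tsum_singleton Y (fun x => ENNReal.ofReal (f x))
  | gt =>
    have hset : {w : ℤ | catOf Y w = Cat3.gt} = {w : ℤ | w ≤ Y}ᶜ := by
      ext w
      rw [Set.mem_compl_iff, Set.mem_setOf_eq, Set.mem_setOf_eq]
      unfold catOf; split_ifs with h1 h2 <;> simp_all <;> omega
    have hkey : (∑' x : ({w : ℤ | w ≤ Y}ᶜ : Set ℤ), f x.1) = 1 - Fcdf f Y := by
      have h := Summable.tsum_subtype_add_tsum_subtype_compl hsum {w : ℤ | w ≤ Y}
      rw [hf1.tsum_eq] at h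
      have hF : (∑' x : ({w : ℤ | w ≤ Y} : Set ℤ), f x.1) = Fcdf f Y := rfl
      linarith [h, hF]
    rw [hset, parent_ofReal f hf0 hsum, hkey]; rfl

lemma osEq_congr {n : ℕ} {Y : ℤ} {r : ℕ} {ω z : Fin n → ℤ}
    (h : ∀ d, catOf Y (ω d) = catOf Y (z d)) : osEq r ω Y ↔ osEq r z Y := by
  have h1 : countLe ω Y = countLe z Y := by
    unfold countLe; congr 1
    apply Finset.filter_congr
    intro d _
    have := cat_facts (h d)
    constructor <;> intro <;> omega
  have h2 : countLe ω (Y - 1) = countLe z (Y - 1) := by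
    unfold countLe; congr 1
    apply Finset.filter_congr
    intro d _
    have := cat_facts (h d)
    constructor <;> intro <;> omega
  unfold osEq; rw [h1, h2]

/-- **Theorem 5.2** (conditional independence given categories): for any category pattern
`c` with positive category masses and any `z ∈ ℤ^D` realizing that pattern,
`P(Z = z ∧ os_r(Z) = Y) = P(cat(Z) = c ∧ os_r(Z) = Y) · ∏_d f(z_d)/m(c_d)`.
Hence, conditional on the pattern, `(Z_1, …, Z_D)` is independent of `{os_r(Z) = Y}` and
its coordinates are i.i.d. from the truncations of `f` to the respective categories. -/
theorem conditional_independence_given_categories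
    (f : ℤ → ℝ) (hf0 : ∀ z, 0 ≤ f z) (hf1 : HasSum f 1)
    (Y : ℤ) (D r : ℕ) (hr1 : 1 ≤ r) (hrD : r ≤ D)
    (c : Fin D → Cat3) (hc : ∀ d, 0 < catMass f Y (c d))
    (z : Fin D → ℤ) (hz : ∀ d, catOf Y (z d) = c d) :
    P f D {ω | (∀ d, ω d = z d) ∧ osEq r ω Y}
      = P f D {ω | (∀ d, catOf Y (ω d) = c d) ∧ osEq r ω Y} *
          ∏ d, f (z d) / catMass f Y (c d) := by

  have hsum : Summable f := hf1.summable
  haveI : IsFiniteMeasure (parentMeasure f) :=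
    ⟨by rw [parent_ofReal f hf0 hsum]; exact ENNReal.ofReal_lt_top⟩
  by_cases hos : osEq r z Y
  · have hAset : {ω : Fin D → ℤ | (∀ d, ω d = z d) ∧ osEq r ω Y}
        = Set.pi Set.univ (fun d => ({z d} : Set ℤ)) := by
      ext ω
      simp only [Set.mem_setOf_eq, Set.mem_pi, Set.mem_univ, Set.mem_singleton_iff,
        true_implies]
      refine ⟨fun h => h.1, fun h => ⟨h, ?_⟩⟩
      rw [show ω = z from funext h]; exact hos
    have hBset : {ω : Fin D → ℤ | (∀ d, catOf Y (ω d) = c d) ∧ osEq r ω Y}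
        = Set.pi Set.univ (fun d => ({w | catOf Y w = c d} : Set ℤ)) := by
      ext ω
      simp only [Set.mem_setOf_eq, Set.mem_pi, Set.mem_univ, true_implies]
      refine ⟨fun h => h.1, fun h => ⟨h, ?_⟩⟩
      have : ∀ d, catOf Y (ω d) = catOf Y (z d) := fun d => by rw [h d, hz d]
      exact (osEq_congr this).mpr hos
    have hL : P f D {ω | (∀ d, ω d = z d) ∧ osEq r ω Y} = ∏ d, f (z d) := by
      rw [P, hAset, Measure.pi_pi]
      have hs : ∀ d : Fin D, parentMeasure f ({z d} : Set ℤ) = ENNReal.ofReal (f (z d)) := by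
        intro d
        rw [parent_apply]
        exact tsum_singleton (z d) (fun x => ENNReal.ofReal (f x))
      simp only [hs]
      rw [← ENNReal.ofReal_prod_of_nonneg (fun d _ => hf0 (z d)),
        ENNReal.toReal_ofReal (Finset.prod_nonneg fun d _ => hf0 (z d))]
    have hR : P f D {ω | (∀ d, catOf Y (ω d) = c d) ∧ osEq r ω Y}
        = ∏ d, catMass f Y (c d) := by
      rw [P, hBset, Measure.pi_pi]
      simp only [parent_cat f hf0 hf1 Y]
      rw [← ENNReal.ofReal_prod_of_nonneg (fun d _ => (hc d).le),
        ENNReal.toReal_ofReal (Finset.prod_nonneg fun d _ => (hc d).le)]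
    rw [hL, hR, Finset.prod_div_distrib,
      mul_div_cancel₀ _ (Finset.prod_pos (fun d _ => hc d)).ne']
  · have hA : {ω : Fin D → ℤ | (∀ d, ω d = z d) ∧ osEq r ω Y} = ∅ := by
      ext ω
      simp only [Set.mem_setOf_eq, Set.mem_empty_iff_false, iff_false, not_and]
      intro h hω
      exact hos (by rwa [show ω = z from funext h] at hω)
    have hB : {ω : Fin D → ℤ | (∀ d, catOf Y (ω d) = c d) ∧ osEq r ω Y} = ∅ := by
      ext ω
      simp only [Set.mem_setOf_eq, Set.mem_empty_iff_false, iff_false, not_and]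
      intro h hω
      have : ∀ d, catOf Y (ω d) = catOf Y (z d) := fun d => by rw [h d, hz d]
      exact hos ((osEq_congr this).mp hω)
    rw [hA, hB]
    simp [P]
end
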